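/- Let C be a small category and let C⁺ = WithInitial(C) be the category obtained from C by freely adjoining an initial object a (so there is exactly one morphism a → v for every object v, and the only endomorphism of a is the identity). Let A be an abelian group regarded as a discrete simplicial group, and let δ assign to each object v of C⁺ an endomorphism δ_v of A such that δ_v ∘ δ_w = δ_w ∘ δ_v whenever there is a morphism between v and w, with δ_a an automorphism of A. Take a as basepoint, set C_n = ⊕_{x ∈ N(C⁺)_n, x ≠ aⁿ} A (aⁿ the totally degenerate n-simplex at a), with twisted faces d_i^δ(g_x) = (δ_{v_i}(g))_{d_i x}, and define Φ : C_n → C_{n+1} by Φ(g_x) = (δ_a^{-1}(g))_{a·x}, where a·x is the (n+1)-simplex obtained from x by prepending a with its unique morphism to the first vertex of x. Then d_0^δ ∘ Φ = id on C_n for all n ≥ 0, and d_i^δ ∘ Φ = Φ ∘ d_{i−1}^δ on C_n for all n ≥ 1 and 1 ≤ i ≤ n+1, while d_1^δ ∘ Φ = 0 on C_0. -/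

import Mathlib

open CategoryTheory Simplicial DirectSum

universe u

attribute [local instance] Classical.decEq

namespace ConeCat

variable (C : Type u) [SmallCategory C]

/-- The `n`-simplices of the nerve of `C⁺ = WithInitial C`. -/
abbrev NerveP (n : ℕ) : Type u := ComposableArrows (WithInitial C) n

/-- The face map of the nerve of `C⁺`. -/
def nerveFace {n : ℕ} (i : Fin (n + 2)) (x : NerveP C (n + 1)) : NerveP C n :=
  (nerve (WithInitial C)).δ i x

/-- The totally degenerate `n`-simplex `aⁿ` at the adjoined initial object `a = star`. -/
def basept (n : ℕ) : NerveP C n :=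
  (CategoryTheory.Functor.const (Fin (n + 1))).obj (WithInitial.star)

/-- `a·x`: the `(n+1)`-simplex obtained from `x` by prepending the initial object `a` via
its unique morphism to the first vertex of `x`. -/
def aDot {n : ℕ} (x : NerveP C n) : NerveP C (n + 1) :=
  x.precomp (Limits.IsInitial.to WithInitial.starInitial x.left)

variable (A : Type u) [AddCommGroup A]

/-- `C_n = ⊕_{x ∈ N(C⁺)_n, x ≠ aⁿ} A`. -/
abbrev Cn (n : ℕ) : Type u :=
  ⨁ _ : { x : NerveP C n // x ≠ basept C n }, A

/-- The inclusion of the copy of `A` labelled by `x`; the copy labelled by the basepoint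
simplex `aⁿ` is set to zero. -/
noncomputable def embHom {n : ℕ} (x : NerveP C n) : A →+ Cn C A n :=
  if h : x = basept C n then 0
  else DirectSum.of (fun _ : { x : NerveP C n // x ≠ basept C n } => A) ⟨x, h⟩

/-- The twisted face homomorphism `d_i^δ(g_x) = (δ_{v_i}(g))_{d_i x}` (the group `A` being a
discrete simplicial group, `d_i` acts as the identity on `A`). -/
noncomputable def dFace (δ : WithInitial C → (A →+ A)) (n : ℕ) (i : Fin (n + 2)) :
    Cn C A (n + 1) →+ Cn C A n :=
  DirectSum.toAddMonoid fun x => (embHom C A (nerveFace C i x.1)).comp (δ (x.1.obj i))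

/-- The contracting homotopy `Φ(g_x) = (δ_a⁻¹(g))_{a·x}`. -/
noncomputable def Phi (σa : A ≃+ A) (n : ℕ) : Cn C A n →+ Cn C A (n + 1) :=
  DirectSum.toAddMonoid fun x => (embHom C A (aDot C x.1)).comp σa.symm.toAddMonoidHom

/-- The twisted differential `∂_{n+1} = Σᵢ (−1)^i d_i^δ : C_{n+1} → C_n`. -/
noncomputable def bdry (δ : WithInitial C → (A →+ A)) (n : ℕ) :
    Cn C A (n + 1) →+ Cn C A n :=
  ∑ i : Fin (n + 2), ((-1 : ℤ) ^ (i : ℕ)) • dFace C A δ n i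

end ConeCat

namespace ConeCat

variable (C : Type u) [SmallCategory C]

lemma homSub {v w : WithInitial C} (hv : v = WithInitial.star) : Subsingleton (v ⟶ w) := by
  subst hv; infer_instance

lemma eq_aDot {n : ℕ} (F : NerveP C (n+1)) (h : F.obj 0 = WithInitial.star) :
    F = aDot C F.δ₀ := by
  fapply CategoryTheory.Functor.ext
  · rintro ⟨(_|j), hj⟩
    · exact h
    · rfl
  · rintro ⟨(_|j), hj⟩ ⟨(_|k), hk⟩ f
    · exact @Subsingleton.elim _ (homSub C h) _ _
    · exact @Subsingleton.elim _ (homSub C h) _ _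
    · exact absurd (leOfHom f) (by simp [Fin.le_def])
    · erw [eqToHom_refl, eqToHom_refl, Category.comp_id, Category.id_comp]
      show F.map f = F.map (homOfLE _)
      congr 1

lemma finEq {n : ℕ} (i : Fin (n+2)) :
    (Fin.succFunctor (n+1) ⋙ (SimplexCategory.toCat.map (SimplexCategory.δ i.succ)).toFunctor) =
    ((SimplexCategory.toCat.map (SimplexCategory.δ i)).toFunctor ⋙ Fin.succFunctor (n+2)) := by
  fapply CategoryTheory.Functor.ext
  · intro j
    exact Fin.succ_succAbove_succ i j
  · intro j k f
    exact Subsingleton.elim (α := ((_ : Fin (n+3)) ⟶ _)) _ _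

lemma d0succ_aDot {n : ℕ} (i : Fin (n+2)) (x : NerveP C (n+1)) :
    (nerveFace C i.succ (aDot C x)).δ₀ = nerveFace C i x := by
  show (aDot C x).whiskerLeft
    (Fin.succFunctor (n+1) ⋙ (SimplexCategory.toCat.map (SimplexCategory.δ i.succ)).toFunctor) = _
  erw [finEq]
  rfl

lemma obj0_face_succ {n : ℕ} (i : Fin (n+2)) (x : NerveP C (n+1)) :
    (nerveFace C i.succ (aDot C x)).obj 0 = WithInitial.star := by
  show (aDot C x).obj (i.succ.succAbove 0) = _
  rw [Fin.succ_succAbove_zero]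
  rfl

lemma face_succ_aDot {n : ℕ} (i : Fin (n+2)) (x : NerveP C (n+1)) :
    nerveFace C i.succ (aDot C x) = aDot C (nerveFace C i x) := by
  rw [eq_aDot C _ (obj0_face_succ C i x), d0succ_aDot]

lemma aDot_basept (n : ℕ) : aDot C (basept C n) = basept C (n+1) :=
  (eq_aDot C (basept C (n+1)) rfl).symm

lemma face1_aDot0 (x : NerveP C 0) : nerveFace C 1 (aDot C x) = basept C 0 := by
  apply ComposableArrows.ext₀
  show (aDot C x).obj ((1 : Fin 2).succAbove 0) = _
  rfl

lemma aDot_ne {n : ℕ} {x : NerveP C n} (hx : x ≠ basept C n) :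
    aDot C x ≠ basept C (n+1) := by
  intro h
  exact hx (congrArg ComposableArrows.δ₀ h)

lemma aDot_obj_succ {n : ℕ} (x : NerveP C n) (i : Fin (n+1)) :
    (aDot C x).obj i.succ = x.obj i := by
  cases i; rfl

lemma nerveFace_zero_aDot {n : ℕ} (x : NerveP C n) :
    nerveFace C 0 (aDot C x) = x := rfl

variable (A : Type u) [AddCommGroup A]

lemma embHom_of {n : ℕ} {x : NerveP C n} (h : x ≠ basept C n) :
    embHom C A x = DirectSum.of (fun _ : { x : NerveP C n // x ≠ basept C n } => A) ⟨x, h⟩ :=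
  dif_neg h

lemma embHom_zero {n : ℕ} {x : NerveP C n} (h : x = basept C n) :
    embHom C A x = 0 :=
  dif_pos h

end ConeCat

open ConeCat in
/-- let `C⁺ = WithInitial C` be `C` with a freely adjoined initial object `a`,
`A` an abelian group regarded as a discrete simplicial group, and `δ` a twisted structure on
`C⁺` with coefficients in `A` such that `δ_a` is an automorphism (witnessed by `σa`).  With
`Φ(g_x) = (δ_a⁻¹ g)_{a·x}`, one has `d_0^δ ∘ Φ = id` on `C_n` for all `n ≥ 0`,
`d_i^δ ∘ Φ = Φ ∘ d_{i−1}^δ` on `C_n` for all `n ≥ 1` and `1 ≤ i ≤ n + 1`, and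
`d_1^δ ∘ Φ = 0` on `C_0`. -/
theorem ConeCat.homotopy_identities (C : Type u) [SmallCategory C]
    (A : Type u) [AddCommGroup A]
    (δ : WithInitial C → (A →+ A))
    (hcomm : ∀ v w : WithInitial C, (Nonempty (v ⟶ w) ∨ Nonempty (w ⟶ v)) →
      (δ v).comp (δ w) = (δ w).comp (δ v))
    (σa : A ≃+ A) (hσa : σa.toAddMonoidHom = δ WithInitial.star) :
    (∀ n : ℕ, (dFace C A δ n 0).comp (Phi C A σa n) = AddMonoidHom.id (Cn C A n)) ∧
    (∀ (n : ℕ) (i : Fin (n + 2)),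
      (dFace C A δ (n + 1) i.succ).comp (Phi C A σa (n + 1)) =
        (Phi C A σa n).comp (dFace C A δ n i)) ∧
    ((dFace C A δ 0 1).comp (Phi C A σa 0) = 0) := by
  have comm : ∀ (v : WithInitial C) (a : A), δ v (σa.symm a) = σa.symm (δ v a) := by
    intro v a
    have h := hcomm v WithInitial.star
      (Or.inr ⟨WithInitial.starInitial.to v⟩)
    rw [← hσa] at h
    apply σa.injective
    have := DFunLike.congr_fun h (σa.symm a)
    simp only [AddMonoidHom.coe_comp, Function.comp_apply, AddEquiv.coe_toAddMonoidHom] at this ⊢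
    rw [← this]
    simp
  refine ⟨?_, ?_, ?_⟩
  · intro n
    apply DirectSum.addHom_ext
    rintro ⟨x, hx⟩ g
    simp only [AddMonoidHom.comp_apply, Phi, DirectSum.toAddMonoid_of,
      AddMonoidHom.id_apply]
    rw [embHom_of C A (aDot_ne C hx)]
    simp only [dFace, DirectSum.toAddMonoid_of, AddMonoidHom.comp_apply]
    rw [nerveFace_zero_aDot]
    have h0 : (aDot C x).obj 0 = WithInitial.star := rfl
    rw [h0, ← hσa]
    simp [embHom_of C A hx]
  · intro n i
    apply DirectSum.addHom_ext
    rintro ⟨x, hx⟩ g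
    simp only [AddMonoidHom.comp_apply, Phi, DirectSum.toAddMonoid_of]
    rw [embHom_of C A (aDot_ne C hx)]
    simp only [dFace, DirectSum.toAddMonoid_of, AddMonoidHom.comp_apply]
    rw [face_succ_aDot, aDot_obj_succ]
    by_cases h : nerveFace C i x = basept C n
    · rw [h, aDot_basept, embHom_zero C A (rfl : basept C (n+1) = basept C (n+1)),
        embHom_zero C A (rfl : basept C n = basept C n)]
      simp
    · rw [embHom_of C A h]
      simp only [DirectSum.toAddMonoid_of, AddMonoidHom.comp_apply]
      rw [embHom_of C A (aDot_ne C h)]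
      simp only [AddEquiv.coe_toAddMonoidHom]
      rw [comm]
  · apply DirectSum.addHom_ext
    rintro ⟨x, hx⟩ g
    simp only [AddMonoidHom.comp_apply, Phi, DirectSum.toAddMonoid_of]
    rw [embHom_of C A (aDot_ne C hx)]
    simp only [dFace, DirectSum.toAddMonoid_of, AddMonoidHom.comp_apply]
    rw [face1_aDot0, embHom_zero C A rfl]
    simp
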